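/- Fix an integer N ≥ 1, a full-support prior p on {x_1,…,x_N}, a privacy level ε ≥ 0, and a sublinear function μ : [0,∞)^N → [0,∞). For every integer M ≥ 1 and every N×M privacy mechanism P satisfying ε-PML with respect to p, there exists an N×N privacy mechanism Q satisfying ε-PML with respect to p such that U(Q) ≥ U(P), where U is the sub-convex utility associated with μ. In particular, the supremum of U over ε-PML mechanisms with arbitrary finite output alphabet equals the supremum over mechanisms with output alphabet of size at most N. -/

import Mathlib

open scoped BigOperators Classical

noncomputable section

/-- The output distribution `P_Y(j) = ∑ i, p i * P i j` induced by a prior `p`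
and a mechanism `P`. -/
def outDist {N M : ℕ} (p : Fin N → ℝ) (P : Matrix (Fin N) (Fin M) ℝ) (j : Fin M) : ℝ :=
  ∑ i, p i * P i j

/-- A privacy mechanism: nonnegative entries, rows summing to one. -/
def IsMechanism {N M : ℕ} (P : Matrix (Fin N) (Fin M) ℝ) : Prop :=
  (∀ i j, 0 ≤ P i j) ∧ ∀ i, ∑ j, P i j = 1

/-- Pointwise maximal leakage to output `j`:
`ℓ(X → y_j) = log((max_i P i j) / P_Y(j))`. -/
def pml {N M : ℕ} (p : Fin N → ℝ) (P : Matrix (Fin N) (Fin M) ℝ) (j : Fin M) : ℝ :=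
  Real.log ((⨆ i, P i j) / outDist p P j)

/-- `P` satisfies `ε`-PML (w.r.t. prior `p`): the leakage of every output of
positive probability is at most `ε`. -/
def SatisfiesPML {N M : ℕ} (p : Fin N → ℝ) (ε : ℝ) (P : Matrix (Fin N) (Fin M) ℝ) : Prop :=
  ∀ j, 0 < outDist p P j → pml p P j ≤ ε

/-- A sublinear function `μ : [0,∞)^N → [0,∞)`: nonnegative, positively
homogeneous and subadditive on the nonnegative orthant. -/
def Sublinear {N : ℕ} (μ : (Fin N → ℝ) → ℝ) : Prop :=
  (∀ x, (∀ i, 0 ≤ x i) → 0 ≤ μ x) ∧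
  (∀ (c : ℝ), 0 ≤ c → ∀ x, (∀ i, 0 ≤ x i) → μ (c • x) = c * μ x) ∧
  (∀ x y, (∀ i, 0 ≤ x i) → (∀ i, 0 ≤ y i) → μ (x + y) ≤ μ x + μ y)

/-- The sub-convex utility associated with `μ`: `U(P) = ∑ j, μ(P_j)` where
`P_j` is the `j`-th column of `P`. -/
def utility {N M : ℕ} (μ : (Fin N → ℝ) → ℝ) (P : Matrix (Fin N) (Fin M) ℝ) : ℝ :=
  ∑ j, μ (fun i => P i j)

end

noncomputable section Aux

/-- Linear reformulation of the PML constraint. -/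
def LinPML {N M : ℕ} (p : Fin N → ℝ) (ε : ℝ) (P : Matrix (Fin N) (Fin M) ℝ) : Prop :=
  ∀ i j, P i j ≤ Real.exp ε * outDist p P j

lemma Sublinear.zero' {N : ℕ} {μ : (Fin N → ℝ) → ℝ} (hμ : Sublinear μ) : μ 0 = 0 := by
  have h := hμ.2.1 0 le_rfl 0 (fun i => le_rfl)
  simpa using h

lemma Sublinear.sum_le' {N : ℕ} {μ : (Fin N → ℝ) → ℝ} (hμ : Sublinear μ) {ι : Type*}
    (s : Finset ι) (f : ι → Fin N → ℝ) (hf : ∀ j, ∀ i, 0 ≤ f j i) :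
    μ (∑ j ∈ s, f j) ≤ ∑ j ∈ s, μ (f j) := by
  classical
  induction s using Finset.cons_induction with
  | empty => simp [hμ.zero']
  | cons a s ha ih =>
      rw [Finset.sum_cons, Finset.sum_cons]
      refine le_trans (hμ.2.2 _ _ (hf a) ?_) (by linarith [ih])
      intro i
      rw [Finset.sum_apply]
      exact Finset.sum_nonneg fun j _ => hf j i

lemma col_eq_zero_of_outDist_eq_zero {N M : ℕ} {p : Fin N → ℝ} (hp : ∀ i, 0 < p i)
    {P : Matrix (Fin N) (Fin M) ℝ} (hP : IsMechanism P) {j : Fin M}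
    (h : outDist p P j = 0) : ∀ i, P i j = 0 := by
  intro i
  have h2 := (Finset.sum_eq_zero_iff_of_nonneg
    (fun i _ => mul_nonneg (hp i).le (hP.1 i j))).mp h i (Finset.mem_univ i)
  rcases mul_eq_zero.mp h2 with h3 | h3
  · exact absurd h3 (hp i).ne'
  · exact h3

lemma satisfiesPML_iff_linPML {N M : ℕ} (hN : 1 ≤ N) {p : Fin N → ℝ} (hp : ∀ i, 0 < p i)
    {ε : ℝ} {P : Matrix (Fin N) (Fin M) ℝ} (hP : IsMechanism P) :
    SatisfiesPML p ε P ↔ LinPML p ε P := by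
  have hne : Nonempty (Fin N) := Fin.pos_iff_nonempty.mp hN
  have hout0 : ∀ j, 0 ≤ outDist p P j := fun j =>
    Finset.sum_nonneg fun i _ => mul_nonneg (hp i).le (hP.1 i j)
  have hsup_pos : ∀ j, 0 < outDist p P j → 0 < ⨆ i, P i j := by
    intro j hj
    have hex : ∃ i, 0 < P i j := by
      by_contra h'
      push_neg at h'
      have : outDist p P j = 0 :=
        Finset.sum_eq_zero fun i _ => by
          have h0 := le_antisymm (h' i) (hP.1 i j); rw [h0, mul_zero]
      exact absurd this hj.ne'
    obtain ⟨i0, hi0⟩ := hex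
    exact lt_of_lt_of_le hi0 (le_ciSup (f := fun i => P i j) (Set.Finite.bddAbove (Set.finite_range _)) i0)
  constructor
  · intro h i j
    rcases eq_or_lt_of_le (hout0 j) with hj | hj
    · rw [col_eq_zero_of_outDist_eq_zero hp hP hj.symm i]
      exact mul_nonneg (Real.exp_pos ε).le (hout0 j)
    · have h1 := h j hj
      rw [pml, Real.log_le_iff_le_exp (div_pos (hsup_pos j hj) hj), div_le_iff₀ hj] at h1
      calc P i j ≤ ⨆ i, P i j := le_ciSup (f := fun i => P i j) (Set.Finite.bddAbove (Set.finite_range _)) i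
        _ ≤ Real.exp ε * outDist p P j := by linarith
  · intro h j hj
    have h1 : (⨆ i, P i j) ≤ Real.exp ε * outDist p P j := ciSup_le fun i => h i j
    rw [pml, Real.log_le_iff_le_exp (div_pos (hsup_pos j hj) hj), div_le_iff₀ hj]
    linarith

end Aux

noncomputable section Embed

lemma embed_step {N M : ℕ} {p : Fin N → ℝ} {ε : ℝ} {μ : (Fin N → ℝ) → ℝ} (hμ : Sublinear μ)
    (P : Matrix (Fin N) (Fin M) ℝ) (hmech : IsMechanism P) (hlin : LinPML p ε P)
    (hcard : (Finset.univ.filter fun j => (fun i => P i j) ≠ 0).card ≤ N) :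
    ∃ Q : Matrix (Fin N) (Fin N) ℝ, IsMechanism Q ∧ LinPML p ε Q ∧
      utility μ P ≤ utility μ Q := by
  classical
  set S : Finset (Fin M) := Finset.univ.filter fun j => (fun i => P i j) ≠ 0 with hS
  have hcard' : Fintype.card ↥S ≤ Fintype.card (Fin N) := by
    simpa [Fintype.card_coe] using hcard
  obtain ⟨φ⟩ := Function.Embedding.nonempty_of_card_le hcard'
  set fib : Fin N → Finset ↥S := fun k => Finset.univ.filter (fun j : ↥S => φ j = k) with hfib
  set Q : Matrix (Fin N) (Fin N) ℝ := fun i k => ∑ j ∈ fib k, P i (j : Fin M) with hQ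
  -- columns of P outside S vanish
  have hoff : ∀ j : Fin M, j ∉ S → ∀ i, P i j = 0 := by
    intro j hj i
    have : ¬ ((fun i => P i j) ≠ 0) := by simpa [hS] using hj
    rw [not_not] at this
    exact congrFun this i
  -- sum over S equals sum over all columns
  have hsum_ext : ∀ f : Fin M → ℝ, (∀ j ∉ S, f j = 0) → ∑ j ∈ S, f j = ∑ j, f j := by
    intro f hf
    exact (Finset.sum_subset (Finset.subset_univ S) (fun j _ hj => hf j hj)).symm ▸ rfl
  have hrows : ∀ i, ∑ k, Q i k = 1 := by
    intro i
    have h1 : ∑ k, Q i k = ∑ j : ↥S, P i (j : Fin M) :=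
      Finset.sum_fiberwise Finset.univ φ (fun j : ↥S => P i (j : Fin M))
    rw [h1, Finset.sum_coe_sort S (fun j => P i j),
      Finset.sum_subset (Finset.subset_univ S) (fun j _ hj => hoff j hj i)]
    exact hmech.2 i
  have hout : ∀ k, outDist p Q k = ∑ j ∈ fib k, outDist p P (j : Fin M) := by
    intro k
    rw [outDist]
    simp only [hQ, Finset.mul_sum]
    rw [Finset.sum_comm]
    rfl
  refine ⟨Q, ⟨fun i k => Finset.sum_nonneg fun j _ => hmech.1 i _, hrows⟩, ?_, ?_⟩
  · intro i k
    rw [hout]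
    calc Q i k = ∑ j ∈ fib k, P i (j : Fin M) := rfl
      _ ≤ ∑ j ∈ fib k, Real.exp ε * outDist p P (j : Fin M) :=
          Finset.sum_le_sum fun j _ => hlin i _
      _ = Real.exp ε * ∑ j ∈ fib k, outDist p P (j : Fin M) := by rw [Finset.mul_sum]
  · -- utility equality
    have hfibcard : ∀ k, (fib k).card ≤ 1 := by
      intro k
      refine Finset.card_le_one.mpr fun a ha b hb => ?_
      have ha' : φ a = k := (Finset.mem_filter.mp ha).2
      have hb' : φ b = k := (Finset.mem_filter.mp hb).2
      exact φ.injective (ha'.trans hb'.symm)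
    have hcol : ∀ k, μ (fun i => Q i k) = ∑ j ∈ fib k, μ (fun i => P i (j : Fin M)) := by
      intro k
      rcases Finset.eq_empty_or_nonempty (fib k) with he | ⟨a, ha⟩
      · rw [he, Finset.sum_empty]
        have : (fun i => Q i k) = 0 := by
          funext i; simp [hQ, he]
        rw [this, hμ.zero']
      · have hsingle : fib k = {a} := by
          refine Finset.eq_singleton_iff_unique_mem.mpr ⟨ha, fun b hb => ?_⟩
          exact Finset.card_le_one.mp (hfibcard k) b hb a ha
        rw [hsingle, Finset.sum_singleton]
        congr 1
        funext i
        simp [hQ, hsingle]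
    have : utility μ Q = utility μ P := by
      rw [utility, utility]
      calc ∑ k, μ (fun i => Q i k)
          = ∑ k, ∑ j ∈ fib k, μ (fun i => P i (j : Fin M)) := by
            exact Finset.sum_congr rfl fun k _ => hcol k
        _ = ∑ j : ↥S, μ (fun i => P i (j : Fin M)) :=
            Finset.sum_fiberwise Finset.univ φ (fun j : ↥S => μ (fun i => P i (j : Fin M)))
        _ = ∑ j ∈ S, μ (fun i => P i j) := Finset.sum_coe_sort S (fun j => μ (fun i => P i j))
        _ = ∑ j, μ (fun i => P i j) := by
            refine Finset.sum_subset (Finset.subset_univ S) fun j _ hj => ?_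
            have : (fun i => P i j) = 0 := funext fun i => hoff j hj i
            rw [this, hμ.zero']
    exact this.ge

end Embed

noncomputable section Exchange

lemma exchange_step {N M : ℕ} {p : Fin N → ℝ} {ε : ℝ} {μ : (Fin N → ℝ) → ℝ} (hμ : Sublinear μ)
    (P : Matrix (Fin N) (Fin M) ℝ) (hmech : IsMechanism P) (hlin : LinPML p ε P)
    (hcard : N < (Finset.univ.filter fun j => (fun i => P i j) ≠ 0).card) :
    ∃ P' : Matrix (Fin N) (Fin M) ℝ, IsMechanism P' ∧ LinPML p ε P' ∧
      utility μ P ≤ utility μ P' ∧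
      (Finset.univ.filter fun j => (fun i => P' i j) ≠ 0).card <
        (Finset.univ.filter fun j => (fun i => P i j) ≠ 0).card := by
  classical
  set S : Finset (Fin M) := Finset.univ.filter fun j => (fun i => P i j) ≠ 0 with hS
  -- the columns indexed by S are linearly dependent
  have hdep : ¬ LinearIndependent ℝ (fun j : ↥S => (fun i => P i (j : Fin M)) : ↥S → Fin N → ℝ) := by
    intro h
    have h1 := h.fintype_card_le_finrank
    rw [Fintype.card_coe, Module.finrank_pi] at h1
    simp only [Fintype.card_fin] at h1
    omega
  obtain ⟨g, hg0, j1, hj1⟩ := Fintype.not_linearIndependent_iff.mp hdep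
  -- extend the coefficients to all of Fin M, with the right sign
  set c0 : Fin M → ℝ := fun j => if h : j ∈ S then g ⟨j, h⟩ else 0 with hc0
  have hc0sum : ∀ i, ∑ j, c0 j * P i j = 0 := by
    intro i
    have h2 : ∑ j ∈ S, c0 j * P i j = ∑ j, c0 j * P i j :=
      Finset.sum_subset (Finset.subset_univ S) fun j _ hj => by
        simp [hc0, hj]
    rw [← h2, ← Finset.sum_coe_sort S (fun j => c0 j * P i j)]
    have h3 : ∀ j : ↥S, c0 (j : Fin M) * P i (j : Fin M) = g j * P i (j : Fin M) := by
      intro j; simp [hc0, j.2]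
    rw [Finset.sum_congr rfl fun j _ => h3 j]
    have := congrFun hg0 i
    simpa [Finset.sum_apply] using this
  have hc0supp : ∀ j, c0 j ≠ 0 → j ∈ S := by
    intro j hj
    by_contra h
    simp [hc0, h] at hj
  have hc0ne : ∃ j, c0 j ≠ 0 := ⟨(j1 : Fin M), by simp [hc0, j1.2]; exact hj1⟩
  obtain ⟨c, hcs, hge, hsupp, hcne⟩ :
      ∃ c : Fin M → ℝ, (∀ i, ∑ j, c j * P i j = 0) ∧
        0 ≤ ∑ j, c j * μ (fun i => P i j) ∧ (∀ j, c j ≠ 0 → j ∈ S) ∧ ∃ j, c j ≠ 0 := by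
    rcases le_or_gt 0 (∑ j, c0 j * μ (fun i => P i j)) with h | h
    · exact ⟨c0, hc0sum, h, hc0supp, hc0ne⟩
    · refine ⟨-c0, fun i => ?_, ?_, fun j hj => hc0supp j (by simpa using hj), ?_⟩
      · simp only [Pi.neg_apply, neg_mul]
        rw [Finset.sum_neg_distrib, hc0sum i, neg_zero]
      · simp only [Pi.neg_apply, neg_mul]
        rw [Finset.sum_neg_distrib]
        linarith
      · obtain ⟨j, hj⟩ := hc0ne
        exact ⟨j, by simpa using hj⟩
  -- there is a negative coefficient
  have hneg : ∃ j, c j < 0 := by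
    by_contra h
    push_neg at h
    have hterm : ∀ i j, c j * P i j = 0 := by
      intro i j
      have := (Finset.sum_eq_zero_iff_of_nonneg
        (fun j _ => mul_nonneg (h j) (hmech.1 i j))).mp (hcs i) j (Finset.mem_univ j)
      exact this
    obtain ⟨j, hj⟩ := hcne
    have hcolz : (fun i => P i j) = 0 := by
      funext i
      rcases mul_eq_zero.mp (hterm i j) with h' | h'
      · exact absurd h' hj
      · exact h'
    have := hsupp j hj
    rw [hS, Finset.mem_filter] at this
    exact this.2 hcolz
  -- find the column that hits zero first
  have hTne : (Finset.univ.filter fun j => c j < 0).Nonempty := by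
    obtain ⟨j, hj⟩ := hneg
    exact ⟨j, Finset.mem_filter.mpr ⟨Finset.mem_univ j, hj⟩⟩
  obtain ⟨j0, hj0mem, hj0min⟩ :=
    Finset.exists_min_image (Finset.univ.filter fun j => c j < 0) (fun j => -1 / c j) hTne
  have hj0neg : c j0 < 0 := (Finset.mem_filter.mp hj0mem).2
  set t : ℝ := -1 / c j0 with ht
  have htpos : 0 < t := by
    rw [ht, div_pos_iff]
    right; constructor <;> [norm_num; exact hj0neg]
  have hfac : ∀ j, 0 ≤ 1 + t * c j := by
    intro j
    rcases le_or_gt 0 (c j) with h | h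
    · nlinarith
    · have h1 := hj0min j (Finset.mem_filter.mpr ⟨Finset.mem_univ j, h⟩)
      have h2 : (-1 / c j) * c j ≤ t * c j := mul_le_mul_of_nonpos_right h1 h.le
      have h3 : (-1 / c j) * c j = -1 := div_mul_cancel₀ (-1) h.ne
      linarith
  have hj0zero : 1 + t * c j0 = 0 := by
    rw [ht, div_mul_cancel₀]
    · ring
    · exact hj0neg.ne
  set P' : Matrix (Fin N) (Fin M) ℝ := fun i j => (1 + t * c j) * P i j with hP'
  have hout' : ∀ j, outDist p P' j = (1 + t * c j) * outDist p P j := by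
    intro j
    rw [outDist, outDist, Finset.mul_sum]
    exact Finset.sum_congr rfl fun i _ => by ring
  refine ⟨P', ⟨fun i j => mul_nonneg (hfac j) (hmech.1 i j), ?_⟩, ?_, ?_, ?_⟩
  · intro i
    have : ∑ j, (1 + t * c j) * P i j = ∑ j, P i j + t * ∑ j, c j * P i j := by
      rw [Finset.mul_sum, ← Finset.sum_add_distrib]
      exact Finset.sum_congr rfl fun j _ => by ring
    rw [hP']
    simp only []
    rw [this, hcs i, hmech.2 i]
    ring
  · intro i j
    rw [hout']
    calc P' i j = (1 + t * c j) * P i j := rfl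
      _ ≤ (1 + t * c j) * (Real.exp ε * outDist p P j) :=
          mul_le_mul_of_nonneg_left (hlin i j) (hfac j)
      _ = Real.exp ε * ((1 + t * c j) * outDist p P j) := by ring
  · -- utility
    have hcol : ∀ j, μ (fun i => P' i j) = (1 + t * c j) * μ (fun i => P i j) := by
      intro j
      have h1 : (fun i => P' i j) = (1 + t * c j) • (fun i => P i j) := by
        funext i; simp [hP', smul_eq_mul]
      rw [h1, hμ.2.1 _ (hfac j) _ (fun i => hmech.1 i j)]
    rw [utility, utility]
    calc ∑ j, μ (fun i => P i j)
        ≤ ∑ j, μ (fun i => P i j) + t * ∑ j, c j * μ (fun i => P i j) := by nlinarith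
      _ = ∑ j, (1 + t * c j) * μ (fun i => P i j) := by
          rw [Finset.mul_sum, ← Finset.sum_add_distrib]
          exact Finset.sum_congr rfl fun j _ => by ring
      _ = ∑ j, μ (fun i => P' i j) := Finset.sum_congr rfl fun j _ => (hcol j).symm
  · -- support decreases
    apply Finset.card_lt_card
    rw [Finset.ssubset_iff_of_subset]
    · refine ⟨j0, ?_, ?_⟩
      · exact hsupp j0 hj0neg.ne
      · simp only [Finset.mem_filter, Finset.mem_univ, true_and, not_not]
        funext i
        simp [hP', hj0zero]
    · intro j hj
      rw [Finset.mem_filter] at hj ⊢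
      refine ⟨Finset.mem_univ j, fun hz => hj.2 ?_⟩
      funext i
      simp [hP', congrFun hz i]

end Exchange

noncomputable section Main

lemma reduce_aux {N : ℕ} {p : Fin N → ℝ} {ε : ℝ} {μ : (Fin N → ℝ) → ℝ} (hμ : Sublinear μ) :
    ∀ k M : ℕ, ∀ P : Matrix (Fin N) (Fin M) ℝ, IsMechanism P → LinPML p ε P →
      (Finset.univ.filter fun j => (fun i => P i j) ≠ 0).card ≤ k →
      ∃ Q : Matrix (Fin N) (Fin N) ℝ, IsMechanism Q ∧ LinPML p ε Q ∧
        utility μ P ≤ utility μ Q := by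
  intro k
  induction k with
  | zero =>
      intro M P hmech hlin hcard
      exact embed_step hμ P hmech hlin (le_trans hcard (Nat.zero_le N))
  | succ k ih =>
      intro M P hmech hlin hcard
      rcases le_or_gt (Finset.univ.filter fun j => (fun i => P i j) ≠ 0).card N with h | h
      · exact embed_step hμ P hmech hlin h
      · obtain ⟨P', hmech', hlin', hu, hlt⟩ := exchange_step hμ P hmech hlin h
        obtain ⟨Q, hQm, hQl, hQu⟩ := ih M P' hmech' hlin'
          (Nat.lt_succ_iff.mp (lt_of_lt_of_le hlt hcard))
        exact ⟨Q, hQm, hQl, le_trans hu hQu⟩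

lemma utility_le_bound {N M : ℕ} {μ : (Fin N → ℝ) → ℝ} (hμ : Sublinear μ)
    (P : Matrix (Fin N) (Fin M) ℝ) (hP : IsMechanism P) :
    utility μ P ≤ ∑ i, μ (Pi.single i 1) := by
  classical
  have hsingle_nn : ∀ i : Fin N, ∀ i', (0:ℝ) ≤ (Pi.single i (1:ℝ) : Fin N → ℝ) i' := by
    intro i i'
    rcases eq_or_ne i' i with h | h <;> simp [Pi.single_apply, h]
  have hcol : ∀ j, (fun i => P i j) = ∑ i, P i j • (Pi.single i (1:ℝ) : Fin N → ℝ) := by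
    intro j
    funext i'
    rw [Finset.sum_apply]
    simp [Pi.single_apply, mul_ite, Finset.sum_ite_eq]
  have hstep : ∀ j, μ (fun i => P i j) ≤ ∑ i, P i j * μ (Pi.single i 1) := by
    intro j
    rw [hcol j]
    refine le_trans (hμ.sum_le' Finset.univ _ ?_) ?_
    · intro i i'
      exact mul_nonneg (hP.1 i j) (by simpa using hsingle_nn i i')
    · refine le_of_eq (Finset.sum_congr rfl fun i _ => ?_)
      exact hμ.2.1 (P i j) (hP.1 i j) _ (hsingle_nn i)
  calc utility μ P ≤ ∑ j, ∑ i, P i j * μ (Pi.single i 1) :=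
        Finset.sum_le_sum fun j _ => hstep j
    _ = ∑ i, (∑ j, P i j) * μ (Pi.single i 1) := by
        rw [Finset.sum_comm]
        exact Finset.sum_congr rfl fun i _ => by rw [Finset.sum_mul]
    _ = ∑ i, μ (Pi.single i 1) := Finset.sum_congr rfl fun i _ => by rw [hP.2 i, one_mul]

end Main

/-- **Cardinality bound.** For every `N × M` mechanism satisfying
`ε`-PML there is an `N × N` mechanism satisfying `ε`-PML with at least the same
sub-convex utility; in particular the supremum of the utility over `ε`-PML
mechanisms with arbitrary finite output alphabets equals the supremum over
mechanisms with at most `N` outputs. -/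
theorem cardinality_bound (N : ℕ) (hN : 1 ≤ N) (p : Fin N → ℝ)
    (hp : ∀ i, 0 < p i) (hpsum : ∑ i, p i = 1)
    (ε : ℝ) (hε : 0 ≤ ε)
    (μ : (Fin N → ℝ) → ℝ) (hμ : Sublinear μ) :
    (∀ M : ℕ, 1 ≤ M → ∀ P : Matrix (Fin N) (Fin M) ℝ,
      IsMechanism P → SatisfiesPML p ε P →
      ∃ Q : Matrix (Fin N) (Fin N) ℝ, IsMechanism Q ∧ SatisfiesPML p ε Q ∧
        utility μ P ≤ utility μ Q) ∧
    sSup {u : ℝ | ∃ M : ℕ, 1 ≤ M ∧ ∃ P : Matrix (Fin N) (Fin M) ℝ,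
        IsMechanism P ∧ SatisfiesPML p ε P ∧ u = utility μ P}
      = sSup {u : ℝ | ∃ M : ℕ, 1 ≤ M ∧ M ≤ N ∧ ∃ P : Matrix (Fin N) (Fin M) ℝ,
        IsMechanism P ∧ SatisfiesPML p ε P ∧ u = utility μ P} := by
  classical
  have hne : Nonempty (Fin N) := Fin.pos_iff_nonempty.mp hN
  have part1 : ∀ M : ℕ, 1 ≤ M → ∀ P : Matrix (Fin N) (Fin M) ℝ,
      IsMechanism P → SatisfiesPML p ε P →
      ∃ Q : Matrix (Fin N) (Fin N) ℝ, IsMechanism Q ∧ SatisfiesPML p ε Q ∧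
        utility μ P ≤ utility μ Q := by
    intro M hM P hmech hpml
    have hlin : LinPML p ε P := (satisfiesPML_iff_linPML hN hp hmech).mp hpml
    obtain ⟨Q, hQm, hQl, hQu⟩ := reduce_aux hμ M M P hmech hlin
      (le_trans (Finset.card_filter_le _ _) (by simp))
    exact ⟨Q, hQm, (satisfiesPML_iff_linPML hN hp hQm).mpr hQl, hQu⟩
  refine ⟨part1, ?_⟩
  set A := {u : ℝ | ∃ M : ℕ, 1 ≤ M ∧ ∃ P : Matrix (Fin N) (Fin M) ℝ,
      IsMechanism P ∧ SatisfiesPML p ε P ∧ u = utility μ P} with hA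
  set B := {u : ℝ | ∃ M : ℕ, 1 ≤ M ∧ M ≤ N ∧ ∃ P : Matrix (Fin N) (Fin M) ℝ,
      IsMechanism P ∧ SatisfiesPML p ε P ∧ u = utility μ P} with hB
  have hBA : B ⊆ A := by
    rintro u ⟨M, hM, _, P, hPm, hPp, hu⟩
    exact ⟨M, hM, P, hPm, hPp, hu⟩
  -- the trivial one-output mechanism
  have htriv : ∃ P1 : Matrix (Fin N) (Fin 1) ℝ, IsMechanism P1 ∧ SatisfiesPML p ε P1 := by
    refine ⟨fun _ _ => 1, ⟨fun i j => zero_le_one, fun i => by simp⟩, ?_⟩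
    intro j hj
    have hout : outDist p (fun _ _ => (1:ℝ)) j = 1 := by
      simp [outDist, hpsum]
    unfold pml
    rw [hout]
    simp [ciSup_const]
    exact hε
  obtain ⟨P1, hP1m, hP1p⟩ := htriv
  have hBne : B.Nonempty := ⟨utility μ P1, 1, le_refl 1, hN, P1, hP1m, hP1p, rfl⟩
  have hAne : A.Nonempty := hBne.mono hBA
  have hAbdd : BddAbove A := by
    refine ⟨∑ i, μ (Pi.single i 1), ?_⟩
    rintro u ⟨M, hM, P, hPm, hPp, hu⟩
    rw [hu]
    exact utility_le_bound hμ P hPm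
  have hBbdd : BddAbove B := hAbdd.mono hBA
  apply le_antisymm
  · refine csSup_le hAne ?_
    rintro u ⟨M, hM, P, hPm, hPp, hu⟩
    obtain ⟨Q, hQm, hQp, hQu⟩ := part1 M hM P hPm hPp
    have hQmem : utility μ Q ∈ B := ⟨N, hN, le_refl N, Q, hQm, hQp, rfl⟩
    calc u = utility μ P := hu
      _ ≤ utility μ Q := hQu
      _ ≤ sSup B := le_csSup hBbdd hQmem
  · exact csSup_le_csSup hAbdd hBne hBA
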